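/- arXiv:2304.05550 — 3 statements merged into one kernel-verified Lean document; each statement's English description precedes it below -/
import Mathlib

section
/- Define σ(T) = (3√(2π)/4)·√(α(T))·tan(√(α(T))) for T ∈ (4/3, √2) ∪ (√2, ∞), where α(T) = 9π²/4 − 4π²/T², and σ(T) = −(3√(2π)/4)·√(−α(T))·tanh(√(−α(T))) for T ∈ (0, 4/3), with σ(4/3) = 0. Then σ has exactly two zeros on (0,√2) ∪ (√2,∞), namely T = 4/3 and T = 4√5/5. -/
open Real Set

set_option maxHeartbeats 1600000 in
theorem stmt_16 (σ : ℝ → ℝ)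
    (hσ1 : ∀ T ∈ Set.Ioo (0:ℝ) (4/3),
      σ T = -(3 * Real.sqrt (2 * π) / 4) *
        Real.sqrt (-(9 * π^2 / 4 - 4 * π^2 / T^2)) *
        Real.tanh (Real.sqrt (-(9 * π^2 / 4 - 4 * π^2 / T^2))))
    (hσ2 : σ (4/3) = 0)
    (hσ3 : ∀ T : ℝ, 4/3 < T → T ≠ Real.sqrt 2 →
      σ T = (3 * Real.sqrt (2 * π) / 4) *
        Real.sqrt (9 * π^2 / 4 - 4 * π^2 / T^2) *
        Real.tan (Real.sqrt (9 * π^2 / 4 - 4 * π^2 / T^2))) :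
    ∀ T ∈ Set.Ioo (0:ℝ) (Real.sqrt 2) ∪ Set.Ioi (Real.sqrt 2),
      (σ T = 0 ↔ T = 4/3 ∨ T = 4 * Real.sqrt 5 / 5) := by
  have hπ := Real.pi_pos
  have hπ2 : (0:ℝ) < π^2 := by positivity
  have hc : (0:ℝ) < 3 * Real.sqrt (2 * π) / 4 := by positivity
  have h43s2 : (4/3:ℝ) < Real.sqrt 2 := by
    rw [show (4/3:ℝ) = Real.sqrt ((4/3)^2) from (Real.sqrt_sq (by norm_num)).symm]
    apply Real.sqrt_lt_sqrt <;> norm_num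
  have hs5 : Real.sqrt 5 ^ 2 = 5 := Real.sq_sqrt (by norm_num)
  have hs5pos : (0:ℝ) < Real.sqrt 5 := Real.sqrt_pos.mpr (by norm_num)
  have hs245 : Real.sqrt 2 < 4 * Real.sqrt 5 / 5 := by
    rw [show (4 * Real.sqrt 5 / 5 : ℝ) = Real.sqrt ((4 * Real.sqrt 5 / 5)^2) from
      (Real.sqrt_sq (by positivity)).symm]
    apply Real.sqrt_lt_sqrt (by norm_num)
    nlinarith
  intro T hT
  rcases hT with ⟨hT0, hTs⟩ | hTs
  · -- T ∈ (0, √2)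
    have hT0 : 0 < T := hT0
    have hT2 : 0 < T^2 := by positivity
    rcases lt_trichotomy T (4/3) with h | h | h
    · -- 0 < T < 4/3 : σ T < 0
      have ha : 0 < -(9 * π^2 / 4 - 4 * π^2 / T^2) := by
        have : 9 * π^2 / 4 < 4 * π^2 / T^2 := by
          rw [div_lt_div_iff₀ (by norm_num) hT2]
          nlinarith [mul_lt_mul_of_pos_left (show T^2 < 16/9 by nlinarith) hπ2]
        linarith
      have hx : 0 < Real.sqrt (-(9 * π^2 / 4 - 4 * π^2 / T^2)) := Real.sqrt_pos.mpr ha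
      have htanh : 0 < Real.tanh (Real.sqrt (-(9 * π^2 / 4 - 4 * π^2 / T^2))) := by
        rw [Real.tanh_eq_sinh_div_cosh]
        exact div_pos (Real.sinh_pos_iff.mpr hx) (Real.cosh_pos _)
      have hσ : σ T < 0 := by
        rw [hσ1 T ⟨hT0, h⟩]
        nlinarith [mul_pos (mul_pos hc hx) htanh]
      constructor
      · intro h0; exact absurd h0 hσ.ne
      · rintro (rfl | rfl)
        · exact absurd h (lt_irrefl _)
        · exact absurd (h.trans (h43s2.trans hs245)) (lt_irrefl _)
    · subst h; simp [hσ2]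
    · -- 4/3 < T < √2 : σ T > 0
      have hT22 : T^2 < 2 := by nlinarith [Real.sq_sqrt ((by norm_num : (0:ℝ) ≤ 2)), Real.sqrt_nonneg 2]
      have ha : 0 < 9 * π^2 / 4 - 4 * π^2 / T^2 := by
        have : 4 * π^2 / T^2 < 9 * π^2 / 4 := by
          rw [div_lt_div_iff₀ hT2 (by norm_num)]
          nlinarith [mul_lt_mul_of_pos_left (show (16:ℝ)/9 < T^2 by nlinarith) hπ2]
        linarith
      have hx : 0 < Real.sqrt (9 * π^2 / 4 - 4 * π^2 / T^2) := Real.sqrt_pos.mpr ha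
      have hxlt : Real.sqrt (9 * π^2 / 4 - 4 * π^2 / T^2) < π / 2 := by
        rw [show π/2 = Real.sqrt ((π/2)^2) from (Real.sqrt_sq (by positivity)).symm]
        apply Real.sqrt_lt_sqrt ha.le
        have : 2 * π^2 < 4 * π^2 / T^2 := by
          rw [lt_div_iff₀ hT2]; nlinarith
        nlinarith
      have htan : 0 < Real.tan (Real.sqrt (9 * π^2 / 4 - 4 * π^2 / T^2)) :=
        Real.tan_pos_of_pos_of_lt_pi_div_two hx hxlt
      have hσ : 0 < σ T := by
        rw [hσ3 T h hTs.ne]; positivity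
      constructor
      · intro h0; exact absurd h0 hσ.ne'
      · rintro (rfl | rfl)
        · exact absurd h (lt_irrefl _)
        · exact absurd (hTs.trans hs245) (lt_irrefl _)
  · -- T > √2
    have hTs : Real.sqrt 2 < T := hTs
    have hT0 : 0 < T := lt_trans (Real.sqrt_pos.mpr (by norm_num)) hTs
    have hT2 : 0 < T^2 := by positivity
    have hT22 : 2 < T^2 := by nlinarith [Real.sq_sqrt ((by norm_num : (0:ℝ) ≤ 2)), Real.sqrt_nonneg 2]
    have h43 : 4/3 < T := h43s2.trans hTs
    have hdiv : 4 * π^2 / T^2 < 2 * π^2 := by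
      rw [div_lt_iff₀ hT2]; nlinarith
    have hdiv0 : 0 < 4 * π^2 / T^2 := by positivity
    obtain ⟨a, hadef⟩ : ∃ x:ℝ, x = 9 * π^2 / 4 - 4 * π^2 / T^2 := ⟨_, rfl⟩
    have ha : 0 < a := by rw [hadef]; linarith
    have hagt : π^2/4 < a := by rw [hadef]; linarith
    have halt : a < 9 * π^2 / 4 := by rw [hadef]; linarith
    have hx : 0 < Real.sqrt a := Real.sqrt_pos.mpr ha
    have hxgt : π / 2 < Real.sqrt a := by
      rw [Real.lt_sqrt (by positivity)]; linarith
    have hxlt : Real.sqrt a < 3 * π / 2 := by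
      rw [Real.sqrt_lt' (by positivity)]; linarith
    have hsq : Real.sqrt a ^ 2 = a := Real.sq_sqrt ha.le
    rw [hσ3 T h43 (ne_of_gt hTs), ← hadef]
    constructor
    · intro h0
      have htan : Real.tan (Real.sqrt a) = 0 := by
        rcases mul_eq_zero.mp h0 with h1 | h1
        · rcases mul_eq_zero.mp h1 with h2 | h2
          · exact absurd h2 hc.ne'
          · exact absurd h2 hx.ne'
        · exact h1
      rw [Real.tan_eq_zero_iff] at htan
      obtain ⟨n, hn⟩ := htan
      have hn1 : n = 2 := by
        rcases lt_trichotomy n 2 with hlt | he | hgt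
        · have h1 : (n:ℝ) ≤ 1 := by exact_mod_cast Int.lt_add_one_iff.mp hlt
          have h2 : (n:ℝ) * π ≤ 1 * π := mul_le_mul_of_nonneg_right h1 hπ.le
          linarith
        · exact he
        · have h1 : (3:ℝ) ≤ n := by exact_mod_cast hgt
          have h2 : (3:ℝ) * π ≤ n * π := mul_le_mul_of_nonneg_right h1 hπ.le
          linarith
      rw [hn1] at hn
      have hxπ : Real.sqrt a = π := by push_cast at hn; linarith
      have haπ : a = π^2 := by rw [← hsq, hxπ]
      have hT16 : T^2 = 16/5 := by
        rw [hadef] at haπ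
        have h5 : 4 * π^2 / T^2 = 5 * π^2 / 4 := by linarith
        rw [div_eq_div_iff hT2.ne' (by norm_num : (4:ℝ) ≠ 0)] at h5
        have h6 : π^2 * 16 = π^2 * (5 * T^2) := by linarith
        have h7 := mul_left_cancel₀ hπ2.ne' h6
        linarith
      right
      have h2 : T^2 = (4 * Real.sqrt 5 / 5)^2 := by
        rw [hT16, div_pow, mul_pow, hs5]; norm_num
      exact (sq_eq_sq₀ hT0.le (by positivity)).mp h2
    · rintro (rfl | rfl)
      · exact absurd h43 (lt_irrefl _)
      · have h165 : (4 * Real.sqrt 5 / 5:ℝ)^2 = 16/5 := by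
          rw [div_pow, mul_pow, hs5]; norm_num
        have haπ : a = π^2 := by rw [hadef, h165]; ring
        rw [haπ, Real.sqrt_sq hπ.le, Real.tan_pi, mul_zero]
end

section
/- With α(T) = 9π²/4 − 4π²/T² and σ defined piecewise as σ(T) = −(3√(2π)/4)√(−α(T)) tanh(√(−α(T))) for 0 < T < 4/3 and σ(T) = (3√(2π)/4)√(α(T)) tan(√(α(T))) for T > 4/3 (T ≠ √2), σ is differentiable at T = 4/3 with derivative σ'(4/3) = 81√2 π^{5/2}/32; in particular both one-sided derivatives at 4/3 equal 81√2 π^{5/2}/32 > 0. -/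
open Real Set

open Filter Topology in
set_option maxHeartbeats 1000000 in
theorem stmt_17 (σ : ℝ → ℝ)
    (hσ1 : ∀ T ∈ Set.Ioo (0:ℝ) (4/3),
      σ T = -(3 * Real.sqrt (2 * π) / 4) *
        Real.sqrt (-(9 * π^2 / 4 - 4 * π^2 / T^2)) *
        Real.tanh (Real.sqrt (-(9 * π^2 / 4 - 4 * π^2 / T^2))))
    (hσ2 : σ (4/3) = 0)
    (hσ3 : ∀ T : ℝ, 4/3 < T → T ≠ Real.sqrt 2 →
      σ T = (3 * Real.sqrt (2 * π) / 4) *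
        Real.sqrt (9 * π^2 / 4 - 4 * π^2 / T^2) *
        Real.tan (Real.sqrt (9 * π^2 / 4 - 4 * π^2 / T^2))) :
    HasDerivAt σ (81 * Real.sqrt 2 * π ^ ((5:ℝ)/2) / 32) (4/3) ∧
    HasDerivWithinAt σ (81 * Real.sqrt 2 * π ^ ((5:ℝ)/2) / 32) (Set.Iio (4/3)) (4/3) ∧
    HasDerivWithinAt σ (81 * Real.sqrt 2 * π ^ ((5:ℝ)/2) / 32) (Set.Ioi (4/3)) (4/3) ∧
    0 < 81 * Real.sqrt 2 * π ^ ((5:ℝ)/2) / 32 := by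
  have hπ : (0:ℝ) < π := Real.pi_pos
  have hdpos : 0 < 81 * Real.sqrt 2 * π ^ ((5:ℝ)/2) / 32 := by positivity
  set C : ℝ := 3 * Real.sqrt (2 * π) / 4 with hC
  set d : ℝ := 81 * Real.sqrt 2 * π ^ ((5:ℝ)/2) / 32 with hd
  -- value identity
  have hdval : d = C * (27 * π ^ 2 / 8) * 1 := by
    rw [hd, hC]
    have h1 : Real.sqrt (2 * π) = Real.sqrt 2 * Real.sqrt π := Real.sqrt_mul (by norm_num) _
    have h2 : π ^ ((5:ℝ)/2) = π ^ 2 * Real.sqrt π := by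
      rw [Real.sqrt_eq_rpow]
      rw [show ((5:ℝ)/2) = (2:ℝ) + 1/2 by norm_num, Real.rpow_add hπ]
      norm_num [Real.rpow_natCast]
    rw [h1, h2]; ring
  -- tanh derivative at 0
  have htanh : HasDerivAt Real.tanh 1 0 := by
    have h : ∀ x, Real.tanh x = Real.sinh x / Real.cosh x := Real.tanh_eq_sinh_div_cosh
    have := (Real.hasDerivAt_sinh 0).div (Real.hasDerivAt_cosh 0) (by positivity)
    rw [funext h]
    exact this.congr_deriv (by simp)
  have htan : HasDerivAt Real.tan 1 0 := by
    have := Real.hasDerivAt_tan (x := 0) (by simp)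
    simpa using this
  have hstanh := hasDerivAt_iff_tendsto_slope.mp htanh
  have hstan := hasDerivAt_iff_tendsto_slope.mp htan
  -- the rational factor
  have hr : Filter.Tendsto (fun T : ℝ => C * (3 * π ^ 2 * (3 * T + 4) / (4 * T ^ 2)))
      (𝓝 (4/3 : ℝ)) (𝓝 (C * (27 * π ^ 2 / 8))) := by
    have hcont : ContinuousAt (fun T : ℝ => C * (3 * π ^ 2 * (3 * T + 4) / (4 * T ^ 2))) (4/3) := by
      fun_prop (disch := norm_num)
    have := hcont.tendsto
    have hval : (3 * π ^ 2 * (3 * (4/3 : ℝ) + 4) / (4 * (4/3 : ℝ) ^ 2)) = 27 * π ^ 2 / 8 := by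
      norm_num
      ring
    rwa [hval] at this
  have key : HasDerivAt σ d (4/3) := by
    rw [hasDerivAt_iff_tendsto_slope]
    rw [show (𝓝[≠] (4/3:ℝ)) = 𝓝[Iio (4/3)] (4/3) ⊔ 𝓝[Ioi (4/3)] (4/3) by
      rw [← nhdsWithin_union, Iio_union_Ioi]]
    rw [Filter.tendsto_sup]
    constructor
    · -- left side, T < 4/3
      set v : ℝ → ℝ := fun T => Real.sqrt (-(9 * π^2 / 4 - 4 * π^2 / T^2)) with hv
      have hmem : Ioo (0:ℝ) (4/3) ∈ 𝓝[Iio (4/3)] (4/3 : ℝ) := by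
        rw [mem_nhdsWithin]
        exact ⟨Ioi 0, isOpen_Ioi, by norm_num, fun x hx => ⟨hx.1, hx.2⟩⟩
      have hαneg : ∀ T ∈ Ioo (0:ℝ) (4/3), 9 * π^2 / 4 - 4 * π^2 / T^2 < 0 := by
        intro T hT
        have hT0' : T ≠ 0 := ne_of_gt hT.1
        have h1 : 9 * π^2 / 4 - 4 * π^2 / T^2 = π^2 * (9 * T^2 - 16) / (4 * T^2) := by
          field_simp; ring
        rw [h1]
        apply div_neg_of_neg_of_pos
        · have h2 : 9 * T^2 - 16 < 0 := by nlinarith [hT.1, hT.2]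
          exact mul_neg_of_pos_of_neg (pow_pos hπ 2) h2
        · nlinarith [hT.1]
      have hvt : Filter.Tendsto v (𝓝[Iio (4/3)] (4/3 : ℝ)) (𝓝[≠] 0) := by
        rw [tendsto_nhdsWithin_iff]
        constructor
        · have hcont : ContinuousAt v (4/3) := by
            apply Real.continuous_sqrt.continuousAt.comp
            fun_prop (disch := norm_num)
          have h' : Filter.Tendsto v (𝓝[Iio (4/3)] (4/3:ℝ)) (𝓝 (v (4/3))) :=
            hcont.tendsto.mono_left nhdsWithin_le_nhds
          have hval : v (4/3) = 0 := by
            rw [hv]; norm_num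
            rw [show (4 * π ^ 2 / (16/9:ℝ) - 9 * π ^ 2 / 4) = 0 by ring, Real.sqrt_zero]
          rwa [hval] at h'
        · filter_upwards [hmem] with T hT
          have := hαneg T hT
          simp only [mem_compl_iff, mem_singleton_iff]
          exact (Real.sqrt_pos.mpr (by linarith)).ne'
      have hlim := (hr.mono_left nhdsWithin_le_nhds).mul (hstanh.comp hvt)
      rw [← hdval] at hlim
      refine hlim.congr' ?_
      filter_upwards [hmem] with T hT
      have hT0 : (0:ℝ) < T := hT.1
      have hTa : T < 4/3 := hT.2
      have hα := hαneg T hT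
      have hv2 : v T ^ 2 = -(9 * π^2 / 4 - 4 * π^2 / T^2) := Real.sq_sqrt (by linarith)
      have hvpos : 0 < v T := Real.sqrt_pos.mpr (by linarith)
      have hne : T - 4/3 ≠ 0 := sub_ne_zero.mpr hTa.ne
      simp only [Function.comp, slope_def_field, hσ1 T hT, hσ2, Real.tanh_zero, sub_zero]
      have hvT : Real.sqrt (-(9 * π^2 / 4 - 4 * π^2 / T^2)) = v T := rfl
      rw [hvT]
      have hne2 : (-4 + T * 3 : ℝ) ≠ 0 := fun h => hne (by linarith)
      field_simp
      ring_nf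
      rw [hv2]
      field_simp
      ring
    · -- right side, T > 4/3
      set u : ℝ → ℝ := fun T => Real.sqrt (9 * π^2 / 4 - 4 * π^2 / T^2) with hu
      have h43 : (4/3:ℝ) < Real.sqrt 2 := by
        rw [show (4/3:ℝ) = Real.sqrt ((4/3)^2) by rw [Real.sqrt_sq]; norm_num]
        apply Real.sqrt_lt_sqrt <;> norm_num
      have hmem : Ioo (4/3:ℝ) (Real.sqrt 2) ∈ 𝓝[Ioi (4/3)] (4/3 : ℝ) := by
        rw [mem_nhdsWithin]
        exact ⟨Iio (Real.sqrt 2), isOpen_Iio, h43, fun x hx => ⟨hx.2, hx.1⟩⟩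
      have hαpos : ∀ T ∈ Ioo (4/3:ℝ) (Real.sqrt 2), 0 < 9 * π^2 / 4 - 4 * π^2 / T^2 := by
        intro T hT
        have hT0 : (0:ℝ) < T := by linarith [hT.1]
        have hT0' : T ≠ 0 := ne_of_gt hT0
        have h1 : 9 * π^2 / 4 - 4 * π^2 / T^2 = π^2 * (9 * T^2 - 16) / (4 * T^2) := by
          field_simp; ring
        rw [h1]
        apply div_pos
        · have h2 : 0 < 9 * T^2 - 16 := by nlinarith [hT.1]
          exact mul_pos (pow_pos hπ 2) h2
        · nlinarith
      have hut : Filter.Tendsto u (𝓝[Ioi (4/3)] (4/3 : ℝ)) (𝓝[≠] 0) := by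
        rw [tendsto_nhdsWithin_iff]
        constructor
        · have hcont : ContinuousAt u (4/3) := by
            apply Real.continuous_sqrt.continuousAt.comp
            fun_prop (disch := norm_num)
          have h' : Filter.Tendsto u (𝓝[Ioi (4/3)] (4/3:ℝ)) (𝓝 (u (4/3))) :=
            hcont.tendsto.mono_left nhdsWithin_le_nhds
          have hval : u (4/3) = 0 := by
            rw [hu]; norm_num
            rw [show (9 * π ^ 2 / 4 - 4 * π ^ 2 / (16/9:ℝ)) = 0 by ring, Real.sqrt_zero]
          rwa [hval] at h'
        · filter_upwards [hmem] with T hT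
          have := hαpos T hT
          simp only [mem_compl_iff, mem_singleton_iff]
          exact (Real.sqrt_pos.mpr this).ne'
      have hlim := (hr.mono_left nhdsWithin_le_nhds).mul (hstan.comp hut)
      rw [← hdval] at hlim
      refine hlim.congr' ?_
      filter_upwards [hmem] with T hT
      have hT0 : (0:ℝ) < T := by linarith [hT.1]
      have hα := hαpos T hT
      have hu2 : u T ^ 2 = 9 * π^2 / 4 - 4 * π^2 / T^2 := Real.sq_sqrt (by linarith)
      have hupos : 0 < u T := Real.sqrt_pos.mpr hα
      have hne : T - 4/3 ≠ 0 := sub_ne_zero.mpr (ne_of_gt hT.1)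
      have htanz : Real.tan 0 = 0 := Real.tan_zero
      simp only [Function.comp, slope_def_field, hσ3 T hT.1 hT.2.ne, hσ2, htanz, sub_zero]
      have huT : Real.sqrt (9 * π^2 / 4 - 4 * π^2 / T^2) = u T := rfl
      rw [huT]
      have hne2 : (-4 + T * 3 : ℝ) ≠ 0 := fun h => hne (by linarith)
      field_simp
      ring_nf
      rw [hu2]
      field_simp
      ring
  exact ⟨key, key.hasDerivWithinAt, key.hasDerivWithinAt, hdpos⟩
end

section
/- With σ and α as in the N=1 case, σ is strictly increasing on each of the intervals (0, √2) and (√2, ∞): for T ∈ (0, 4/3), σ'(T) = (3√(2π) α'(T)/(8√(−α(T))))·(tanh(√(−α(T))) + √(−α(T))/cosh²(√(−α(T)))) > 0, and for T ∈ (4/3, √2) ∪ (√2, ∞), σ'(T) = (3√(2π) α'(T)/(8√(α(T))))·(tan(√(α(T))) + √(α(T)) sec²(√(α(T)))) > 0. -/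
open Real Set


lemma aux_tanh_hasDerivAt (x : ℝ) : HasDerivAt Real.tanh (1 / Real.cosh x ^ 2) x := by
  have h := (Real.hasDerivAt_sinh x).div (Real.hasDerivAt_cosh x) (Real.cosh_pos x).ne'
  have e : Real.tanh = fun y => Real.sinh y / Real.cosh y :=
    funext fun y => Real.tanh_eq_sinh_div_cosh y
  rw [e]
  refine h.congr_deriv ?_
  have h1 := Real.cosh_sq_sub_sinh_sq x
  field_simp
  nlinarith [h1]

lemma aux_tanh_pos {x : ℝ} (hx : 0 < x) : 0 < Real.tanh x := by
  rw [Real.tanh_eq_sinh_div_cosh]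
  exact div_pos (by rwa [Real.sinh_pos_iff]) (Real.cosh_pos x)

lemma aux_add_sin_pos {x : ℝ} (hx : 0 < x) : 0 < x + Real.sin x := by
  rcases le_or_gt x 1 with h | h
  · have : 0 < Real.sin x := Real.sin_pos_of_pos_of_lt_pi hx (by nlinarith [Real.pi_gt_three])
    linarith
  · have := Real.neg_one_le_sin x
    linarith

lemma aux_cos_ne_zero {v : ℝ} (h0 : 0 < v) (h3 : v < 3 * π / 2) (hne : v ≠ π / 2) :
    Real.cos v ≠ 0 := by
  intro h
  obtain ⟨k, hk⟩ := Real.cos_eq_zero_iff.1 h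
  have hπ := Real.pi_pos
  have hk0 : (0:ℝ) < (2 * k + 1) := by
    by_contra hc
    push_neg at hc
    nlinarith [hk]
  have hk3 : 2 * (k:ℝ) + 1 < 3 := by nlinarith [hπ]
  have : (k : ℝ) = 0 := by
    have h1 : (0:ℤ) < 2 * k + 1 := by exact_mod_cast hk0
    have h2 : (2 * k + 1 : ℤ) < 3 := by exact_mod_cast (by push_cast; linarith : ((2 * k + 1 : ℤ):ℝ) < 3)
    have : k = 0 := by omega
    exact_mod_cast congrArg Int.cast this
  apply hne
  rw [hk, this]; ring

lemma key1 (σ : ℝ → ℝ)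
    (hσ1 : ∀ T ∈ Set.Ioo (0:ℝ) (4/3),
      σ T = -(3 * Real.sqrt (2 * π) / 4) *
        Real.sqrt (-(9 * π^2 / 4 - 4 * π^2 / T^2)) *
        Real.tanh (Real.sqrt (-(9 * π^2 / 4 - 4 * π^2 / T^2))))
    {T : ℝ} (hT : T ∈ Set.Ioo (0:ℝ) (4/3)) :
    HasDerivAt σ ((3 * Real.sqrt (2 * π) * (8 * π^2 / T^3) /
          (8 * Real.sqrt (-(9 * π^2 / 4 - 4 * π^2 / T^2)))) *
        (Real.tanh (Real.sqrt (-(9 * π^2 / 4 - 4 * π^2 / T^2))) +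
          Real.sqrt (-(9 * π^2 / 4 - 4 * π^2 / T^2)) /
            (Real.cosh (Real.sqrt (-(9 * π^2 / 4 - 4 * π^2 / T^2))))^2)) T ∧
    0 < (3 * Real.sqrt (2 * π) * (8 * π^2 / T^3) /
          (8 * Real.sqrt (-(9 * π^2 / 4 - 4 * π^2 / T^2)))) *
        (Real.tanh (Real.sqrt (-(9 * π^2 / 4 - 4 * π^2 / T^2))) +
          Real.sqrt (-(9 * π^2 / 4 - 4 * π^2 / T^2)) /
            (Real.cosh (Real.sqrt (-(9 * π^2 / 4 - 4 * π^2 / T^2))))^2) := by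
  obtain ⟨hT0, hT4⟩ := hT
  have hπ := Real.pi_pos
  have hB : 0 < -(9 * π^2 / 4 - 4 * π^2 / T^2) := by
    have h2 : 9 * π^2 / 4 < 4 * π^2 / T^2 := by
      rw [div_lt_div_iff₀ (by norm_num) (by positivity)]
      nlinarith [mul_pos hπ hπ, mul_lt_mul'' hT4 hT4 hT0.le hT0.le]
    linarith
  set B := -(9 * π^2 / 4 - 4 * π^2 / T^2) with hBdef
  have hu : 0 < Real.sqrt B := Real.sqrt_pos.2 hB
  have hcosh := Real.cosh_pos (Real.sqrt B)
  -- derivative of B as a function of t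
  have hA0 : HasDerivAt (fun t : ℝ => 4 * π^2 / t^2)
      ((0 * T^2 - 4 * π^2 * (2 * T^1)) / (T^2)^2) T :=
    (hasDerivAt_const T (4 * π^2)).div (hasDerivAt_pow 2 T) (by positivity)
  have hA : HasDerivAt (fun t : ℝ => -(9 * π^2 / 4 - 4 * π^2 / t^2)) (-(8 * π^2 / T^3)) T := by
    have h := ((hasDerivAt_const T (9 * π^2 / 4)).sub hA0).neg
    refine h.congr_deriv ?_
    field_simp
    ring
  have hg : HasDerivAt (fun t : ℝ => Real.sqrt (-(9 * π^2 / 4 - 4 * π^2 / t^2)))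
      (-(8 * π^2 / T^3) / (2 * Real.sqrt B)) T := hA.sqrt hB.ne'
  have htanh := (aux_tanh_hasDerivAt (Real.sqrt B)).comp T hg
  have h1 : HasDerivAt (fun t : ℝ => -(3 * Real.sqrt (2 * π) / 4) *
      Real.sqrt (-(9 * π^2 / 4 - 4 * π^2 / t^2)))
      (-(3 * Real.sqrt (2 * π) / 4) * (-(8 * π^2 / T^3) / (2 * Real.sqrt B))) T :=
    hg.const_mul _
  have h2 : HasDerivAt (fun t : ℝ => -(3 * Real.sqrt (2 * π) / 4) *
      Real.sqrt (-(9 * π^2 / 4 - 4 * π^2 / t^2)) *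
      Real.tanh (Real.sqrt (-(9 * π^2 / 4 - 4 * π^2 / t^2))))
      ((-(3 * Real.sqrt (2 * π) / 4) * (-(8 * π^2 / T^3) / (2 * Real.sqrt B))) *
        Real.tanh (Real.sqrt B) +
        (-(3 * Real.sqrt (2 * π) / 4) * Real.sqrt B) *
        (1 / Real.cosh (Real.sqrt B) ^ 2 * (-(8 * π^2 / T^3) / (2 * Real.sqrt B)))) T :=
    h1.mul htanh
  have hev : σ =ᶠ[nhds T] (fun t : ℝ => -(3 * Real.sqrt (2 * π) / 4) *
      Real.sqrt (-(9 * π^2 / 4 - 4 * π^2 / t^2)) *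
      Real.tanh (Real.sqrt (-(9 * π^2 / 4 - 4 * π^2 / t^2)))) :=
    Filter.eventuallyEq_of_mem (isOpen_Ioo.mem_nhds ⟨hT0, hT4⟩) hσ1
  have hσd : HasDerivAt σ ((-(3 * Real.sqrt (2 * π) / 4) * (-(8 * π^2 / T^3) / (2 * Real.sqrt B))) *
        Real.tanh (Real.sqrt B) +
        (-(3 * Real.sqrt (2 * π) / 4) * Real.sqrt B) *
        (1 / Real.cosh (Real.sqrt B) ^ 2 * (-(8 * π^2 / T^3) / (2 * Real.sqrt B)))) T :=
    h2.congr_of_eventuallyEq hev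
  have hsqrt2π : 0 < Real.sqrt (2 * π) := Real.sqrt_pos.2 (by positivity)
  constructor
  · refine hσd.congr_deriv ?_
    field_simp
    ring
  · have hpos1 : 0 < 3 * Real.sqrt (2 * π) * (8 * π^2 / T^3) / (8 * Real.sqrt B) := by
      positivity
    have hpos2 : 0 < Real.tanh (Real.sqrt B) + Real.sqrt B / Real.cosh (Real.sqrt B) ^ 2 :=
      add_pos (aux_tanh_pos hu) (by positivity)
    exact mul_pos hpos1 hpos2

lemma key2 (σ : ℝ → ℝ)
    (hσ3 : ∀ T : ℝ, 4/3 < T → T ≠ Real.sqrt 2 →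
      σ T = (3 * Real.sqrt (2 * π) / 4) *
        Real.sqrt (9 * π^2 / 4 - 4 * π^2 / T^2) *
        Real.tan (Real.sqrt (9 * π^2 / 4 - 4 * π^2 / T^2)))
    {T : ℝ} (hT4 : 4/3 < T) (hTne : T ≠ Real.sqrt 2) :
    HasDerivAt σ ((3 * Real.sqrt (2 * π) * (8 * π^2 / T^3) /
          (8 * Real.sqrt (9 * π^2 / 4 - 4 * π^2 / T^2))) *
        (Real.tan (Real.sqrt (9 * π^2 / 4 - 4 * π^2 / T^2)) +
          Real.sqrt (9 * π^2 / 4 - 4 * π^2 / T^2) /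
            (Real.cos (Real.sqrt (9 * π^2 / 4 - 4 * π^2 / T^2)))^2)) T ∧
    0 < (3 * Real.sqrt (2 * π) * (8 * π^2 / T^3) /
          (8 * Real.sqrt (9 * π^2 / 4 - 4 * π^2 / T^2))) *
        (Real.tan (Real.sqrt (9 * π^2 / 4 - 4 * π^2 / T^2)) +
          Real.sqrt (9 * π^2 / 4 - 4 * π^2 / T^2) /
            (Real.cos (Real.sqrt (9 * π^2 / 4 - 4 * π^2 / T^2)))^2) := by
  have hπ := Real.pi_pos
  have hT0 : (0:ℝ) < T := by linarith
  have hB : 0 < 9 * π^2 / 4 - 4 * π^2 / T^2 := by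
    have h2 : 4 * π^2 / T^2 < 9 * π^2 / 4 := by
      rw [div_lt_div_iff₀ (by positivity) (by norm_num)]
      nlinarith [mul_pos hπ hπ, mul_lt_mul'' hT4 hT4 (by norm_num : (0:ℝ) ≤ 4/3) (by norm_num : (0:ℝ) ≤ 4/3)]
    linarith
  set B := 9 * π^2 / 4 - 4 * π^2 / T^2 with hBdef
  have hv : 0 < Real.sqrt B := Real.sqrt_pos.2 hB
  have hv3 : Real.sqrt B < 3 * π / 2 := by
    rw [show (3 * π / 2 : ℝ) = Real.sqrt ((3 * π / 2)^2) from (Real.sqrt_sq (by positivity)).symm]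
    apply Real.sqrt_lt_sqrt hB.le
    have : 0 < 4 * π^2 / T^2 := by positivity
    nlinarith
  have hvne : Real.sqrt B ≠ π / 2 := by
    intro h
    have hB2 : B = (π/2)^2 := by
      rw [← Real.sq_sqrt hB.le, h]
    have hT2 : T^2 = 2 := by
      have hT2ne : T^2 ≠ 0 := by positivity
      rw [hBdef] at hB2
      field_simp at hB2
      nlinarith [mul_pos hπ hπ]
    apply hTne
    rw [← hT2]
    exact (Real.sqrt_sq hT0.le).symm
  have hcos : Real.cos (Real.sqrt B) ≠ 0 := aux_cos_ne_zero hv hv3 hvne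
  -- derivative of B
  have hA0 : HasDerivAt (fun t : ℝ => 4 * π^2 / t^2)
      ((0 * T^2 - 4 * π^2 * (2 * T^1)) / (T^2)^2) T :=
    (hasDerivAt_const T (4 * π^2)).div (hasDerivAt_pow 2 T) (by positivity)
  have hA : HasDerivAt (fun t : ℝ => 9 * π^2 / 4 - 4 * π^2 / t^2) (8 * π^2 / T^3) T := by
    have h := (hasDerivAt_const T (9 * π^2 / 4)).sub hA0
    refine h.congr_deriv ?_
    field_simp
    ring
  have hg : HasDerivAt (fun t : ℝ => Real.sqrt (9 * π^2 / 4 - 4 * π^2 / t^2))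
      (8 * π^2 / T^3 / (2 * Real.sqrt B)) T := hA.sqrt hB.ne'
  have htan := (Real.hasDerivAt_tan hcos).comp T hg
  have h1 : HasDerivAt (fun t : ℝ => 3 * Real.sqrt (2 * π) / 4 *
      Real.sqrt (9 * π^2 / 4 - 4 * π^2 / t^2))
      (3 * Real.sqrt (2 * π) / 4 * (8 * π^2 / T^3 / (2 * Real.sqrt B))) T := hg.const_mul _
  have h2 : HasDerivAt (fun t : ℝ => 3 * Real.sqrt (2 * π) / 4 *
      Real.sqrt (9 * π^2 / 4 - 4 * π^2 / t^2) *
      Real.tan (Real.sqrt (9 * π^2 / 4 - 4 * π^2 / t^2)))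
      ((3 * Real.sqrt (2 * π) / 4 * (8 * π^2 / T^3 / (2 * Real.sqrt B))) *
        Real.tan (Real.sqrt B) +
        (3 * Real.sqrt (2 * π) / 4 * Real.sqrt B) *
        (1 / Real.cos (Real.sqrt B) ^ 2 * (8 * π^2 / T^3 / (2 * Real.sqrt B)))) T :=
    h1.mul htan
  have hopen : IsOpen {t : ℝ | 4/3 < t ∧ t ≠ Real.sqrt 2} := by
    have : {t : ℝ | 4/3 < t ∧ t ≠ Real.sqrt 2} = Set.Ioi (4/3) ∩ {Real.sqrt 2}ᶜ := by
      ext t; simp [Set.mem_Ioi, and_comm]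
    rw [this]
    exact isOpen_Ioi.inter isOpen_compl_singleton
  have hev : σ =ᶠ[nhds T] (fun t : ℝ => 3 * Real.sqrt (2 * π) / 4 *
      Real.sqrt (9 * π^2 / 4 - 4 * π^2 / t^2) *
      Real.tan (Real.sqrt (9 * π^2 / 4 - 4 * π^2 / t^2))) :=
    Filter.eventuallyEq_of_mem (hopen.mem_nhds ⟨hT4, hTne⟩)
      (fun t ht => hσ3 t ht.1 ht.2)
  have hσd := h2.congr_of_eventuallyEq hev
  have hsqrt2π : 0 < Real.sqrt (2 * π) := Real.sqrt_pos.2 (by positivity)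
  constructor
  · refine hσd.congr_deriv ?_
    field_simp
    ring
  · have hpos1 : 0 < 3 * Real.sqrt (2 * π) * (8 * π^2 / T^3) / (8 * Real.sqrt B) := by
      positivity
    have hpos2 : 0 < Real.tan (Real.sqrt B) + Real.sqrt B / Real.cos (Real.sqrt B) ^ 2 := by
      have heq : Real.tan (Real.sqrt B) + Real.sqrt B / Real.cos (Real.sqrt B) ^ 2 =
          (2 * Real.sqrt B + Real.sin (2 * Real.sqrt B)) / (2 * Real.cos (Real.sqrt B) ^ 2) := by
        rw [Real.tan_eq_sin_div_cos, Real.sin_two_mul]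
        field_simp
        ring
      rw [heq]
      apply div_pos (aux_add_sin_pos (by positivity))
      have := hcos
      positivity
    exact mul_pos hpos1 hpos2

theorem stmt_19 (σ : ℝ → ℝ)
    (hσ1 : ∀ T ∈ Set.Ioo (0:ℝ) (4/3),
      σ T = -(3 * Real.sqrt (2 * π) / 4) *
        Real.sqrt (-(9 * π^2 / 4 - 4 * π^2 / T^2)) *
        Real.tanh (Real.sqrt (-(9 * π^2 / 4 - 4 * π^2 / T^2))))
    (hσ2 : σ (4/3) = 0)
    (hσ3 : ∀ T : ℝ, 4/3 < T → T ≠ Real.sqrt 2 →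
      σ T = (3 * Real.sqrt (2 * π) / 4) *
        Real.sqrt (9 * π^2 / 4 - 4 * π^2 / T^2) *
        Real.tan (Real.sqrt (9 * π^2 / 4 - 4 * π^2 / T^2))) :
    StrictMonoOn σ (Set.Ioo (0:ℝ) (Real.sqrt 2)) ∧
    StrictMonoOn σ (Set.Ioi (Real.sqrt 2)) ∧
    (∀ T ∈ Set.Ioo (0:ℝ) (4/3),
      deriv σ T = (3 * Real.sqrt (2 * π) * (8 * π^2 / T^3) /
          (8 * Real.sqrt (-(9 * π^2 / 4 - 4 * π^2 / T^2)))) *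
        (Real.tanh (Real.sqrt (-(9 * π^2 / 4 - 4 * π^2 / T^2))) +
          Real.sqrt (-(9 * π^2 / 4 - 4 * π^2 / T^2)) /
            (Real.cosh (Real.sqrt (-(9 * π^2 / 4 - 4 * π^2 / T^2))))^2) ∧
      0 < deriv σ T) ∧
    (∀ T : ℝ, (T ∈ Set.Ioo (4/3 : ℝ) (Real.sqrt 2) ∨ Real.sqrt 2 < T) →
      deriv σ T = (3 * Real.sqrt (2 * π) * (8 * π^2 / T^3) /
          (8 * Real.sqrt (9 * π^2 / 4 - 4 * π^2 / T^2))) *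
        (Real.tan (Real.sqrt (9 * π^2 / 4 - 4 * π^2 / T^2)) +
          Real.sqrt (9 * π^2 / 4 - 4 * π^2 / T^2) /
            (Real.cos (Real.sqrt (9 * π^2 / 4 - 4 * π^2 / T^2)))^2) ∧
      0 < deriv σ T) := by
  have hπ := Real.pi_pos
  have h43 : (4/3 : ℝ) < Real.sqrt 2 := by
    rw [show (4/3:ℝ) = Real.sqrt ((4/3)^2) from (Real.sqrt_sq (by norm_num)).symm]
    exact Real.sqrt_lt_sqrt (by positivity) (by norm_num)
  -- sign lemmas
  have σneg : ∀ T ∈ Set.Ioo (0:ℝ) (4/3), σ T < 0 := by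
    rintro T ⟨hT0, hT4⟩
    rw [hσ1 T ⟨hT0, hT4⟩]
    have hB : 0 < -(9 * π^2 / 4 - 4 * π^2 / T^2) := by
      have h2 : 9 * π^2 / 4 < 4 * π^2 / T^2 := by
        rw [div_lt_div_iff₀ (by norm_num) (by positivity)]
        nlinarith [mul_pos hπ hπ, mul_lt_mul'' hT4 hT4 hT0.le hT0.le]
      linarith
    have h1 : 0 < Real.sqrt (-(9 * π^2 / 4 - 4 * π^2 / T^2)) := Real.sqrt_pos.2 hB
    have h2 : 0 < Real.tanh (Real.sqrt (-(9 * π^2 / 4 - 4 * π^2 / T^2))) := aux_tanh_pos h1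
    have h3 : 0 < Real.sqrt (2 * π) := Real.sqrt_pos.2 (by positivity)
    nlinarith [mul_pos (mul_pos h3 h1) h2]
  have σpos : ∀ T ∈ Set.Ioo (4/3 : ℝ) (Real.sqrt 2), 0 < σ T := by
    rintro T ⟨hT4, hT2⟩
    have hT0 : (0:ℝ) < T := by linarith
    rw [hσ3 T hT4 (ne_of_lt hT2)]
    have hTsq : T^2 < 2 := by
      have h := mul_lt_mul'' hT2 hT2 hT0.le hT0.le
      rw [Real.mul_self_sqrt (by norm_num : (0:ℝ) ≤ 2)] at h
      nlinarith
    have hB : 0 < 9 * π^2 / 4 - 4 * π^2 / T^2 := by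
      have h2 : 4 * π^2 / T^2 < 9 * π^2 / 4 := by
        rw [div_lt_div_iff₀ (by positivity) (by norm_num)]
        nlinarith [mul_pos hπ hπ, mul_lt_mul'' hT4 hT4 (by norm_num : (0:ℝ) ≤ 4/3) (by norm_num : (0:ℝ) ≤ 4/3)]
      linarith
    have hBlt : 9 * π^2 / 4 - 4 * π^2 / T^2 < (π/2)^2 := by
      have h2 : 2 * π^2 < 4 * π^2 / T^2 := by
        rw [lt_div_iff₀ (by positivity)]
        nlinarith [mul_pos hπ hπ]
      nlinarith
    have hv : 0 < Real.sqrt (9 * π^2 / 4 - 4 * π^2 / T^2) := Real.sqrt_pos.2 hB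
    have hvlt : Real.sqrt (9 * π^2 / 4 - 4 * π^2 / T^2) < π / 2 := by
      rw [show (π/2 : ℝ) = Real.sqrt ((π/2)^2) from (Real.sqrt_sq (by positivity)).symm]
      exact Real.sqrt_lt_sqrt hB.le hBlt
    have htan : 0 < Real.tan (Real.sqrt (9 * π^2 / 4 - 4 * π^2 / T^2)) :=
      Real.tan_pos_of_pos_of_lt_pi_div_two hv hvlt
    have h3 : 0 < Real.sqrt (2 * π) := Real.sqrt_pos.2 (by positivity)
    positivity
  -- monotonicity pieces
  have mono1 : StrictMonoOn σ (Set.Ioo (0:ℝ) (4/3)) := by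
    apply strictMonoOn_of_deriv_pos (convex_Ioo _ _)
    · exact fun x hx => ((key1 σ hσ1 hx).1).differentiableAt.continuousAt.continuousWithinAt
    · intro x hx
      rw [interior_Ioo] at hx
      have k := key1 σ hσ1 hx
      rw [k.1.deriv]
      exact k.2
  have mono2 : StrictMonoOn σ (Set.Ioo (4/3 : ℝ) (Real.sqrt 2)) := by
    apply strictMonoOn_of_deriv_pos (convex_Ioo _ _)
    · exact fun x hx =>
        ((key2 σ hσ3 hx.1 (ne_of_lt hx.2)).1).differentiableAt.continuousAt.continuousWithinAt
    · intro x hx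
      rw [interior_Ioo] at hx
      have k := key2 σ hσ3 hx.1 (ne_of_lt hx.2)
      rw [k.1.deriv]
      exact k.2
  have mono3 : StrictMonoOn σ (Set.Ioi (Real.sqrt 2)) := by
    apply strictMonoOn_of_deriv_pos (convex_Ioi _)
    · exact fun x hx =>
        ((key2 σ hσ3 (lt_trans h43 hx) (ne_of_gt hx)).1).differentiableAt.continuousAt.continuousWithinAt
    · intro x hx
      rw [interior_Ioi] at hx
      have k := key2 σ hσ3 (lt_trans h43 hx) (ne_of_gt hx)
      rw [k.1.deriv]
      exact k.2
  refine ⟨?_, mono3, ?_, ?_⟩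
  · -- glue on Ioo 0 √2
    intro x hx y hy hxy
    rcases lt_trichotomy y (4/3) with hy4 | hy4 | hy4
    · exact mono1 ⟨hx.1, lt_trans hxy hy4⟩ ⟨hy.1, hy4⟩ hxy
    · have : σ x < 0 := σneg x ⟨hx.1, hy4 ▸ hxy⟩
      rw [hy4, hσ2]
      exact this
    · rcases lt_trichotomy x (4/3) with hx4 | hx4 | hx4
      · exact lt_trans (σneg x ⟨hx.1, hx4⟩) (σpos y ⟨hy4, hy.2⟩)
      · rw [← hx4] at hσ2
        rw [hσ2]
        exact σpos y ⟨hy4, hy.2⟩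
      · exact mono2 ⟨hx4, hx.2⟩ ⟨hy4, hy.2⟩ hxy
  · intro T hT
    have k := key1 σ hσ1 hT
    refine ⟨k.1.deriv, ?_⟩
    rw [k.1.deriv]
    exact k.2
  · intro T hT
    have h4 : 4/3 < T ∧ T ≠ Real.sqrt 2 := by
      rcases hT with ⟨h1, h2⟩ | h
      · exact ⟨h1, ne_of_lt h2⟩
      · exact ⟨lt_trans h43 h, ne_of_gt h⟩
    have k := key2 σ hσ3 h4.1 h4.2
    refine ⟨k.1.deriv, ?_⟩
    rw [k.1.deriv]
    exact k.2
end
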